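/- Dynamic programming recurrence for exchange-stable perfect matchings on hourglasses: let H be an hourglass of height h where every perfect matching either matches each layer i horizontally ({u_i,w_i} ∈ M) or cross-matches consecutive layers i-1 and i ({u_{i-1},w_i},{u_i,w_{i-1}} ⊆ M). Define D_h[i] (resp. D_c[i]) to be true iff the sub-hourglass on layers 0..i has a perfect exchange-stable matching in which layer i is horizontally matched (resp. layers i-1 and i are cross-matched). Then for all 2 ≤ i ≤ h-1: D_h[i] = D_c[i-1] ∨ (D_h[i-1] ∧ τ_h^{i-1,i}) and D_c[i] = (D_c[i-2] ∨ D_h[i-2]) ∧ τ_c^{i-1,i}, where τ_h^{i-1,i} (resp. τ_c^{i-1,i}) is true iff horizontally matching (resp. cross-matching) layers i-1 and i is exchange-stable restricted to the four agents u_{i-1}, w_{i-1}, u_i, w_i. -/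
import Mathlib


/-- Acceptability inside an hourglass with layers `(u i, w i)`, `i < h`:
`u i` finds acceptable exactly `w (i-1)`, `w i`, `w (i+1)` (within range), and
symmetrically for `w i`. -/
def HGAdj {V : Type*} (h : ℕ) (u w : ℕ → V) (x y : V) : Prop :=
  ∃ i < h, ∃ j < h,
    ((x = u i ∧ y = w j) ∨ (x = w i ∧ y = u j)) ∧ (i = j ∨ i + 1 = j ∨ j + 1 = i)

/-- Layer `z` is horizontally matched by `M`. -/
def HorizAt {V : Type*} (u w : ℕ → V) (M : V → V) (z : ℕ) : Prop :=
  M (u z) = w z ∧ M (w z) = u z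

/-- Layers `z - 1` and `z` are cross-matched by `M`. -/
def CrossAt {V : Type*} (u w : ℕ → V) (M : V → V) (z : ℕ) : Prop :=
  1 ≤ z ∧ M (u z) = w (z - 1) ∧ M (u (z - 1)) = w z ∧
    M (w z) = u (z - 1) ∧ M (w (z - 1)) = u z

/-- `M` perfectly matches the sub-hourglass on layers `0, …, i`, decomposing
into horizontal and cross matches. -/
def PerfectUpTo {V : Type*} (u w : ℕ → V) (M : V → V) (i : ℕ) : Prop :=
  ∀ z ≤ i, HorizAt u w M z ∨ CrossAt u w M z ∨ (z + 1 ≤ i ∧ CrossAt u w M (z + 1))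

/-- The agents of layers `0, …, i`. -/
def LayerSet {V : Type*} (u w : ℕ → V) (i : ℕ) : Set V :=
  {v | ∃ z ≤ i, v = u z ∨ v = w z}

/-- No exchange-blocking pair of `M` among the agents of `S`. -/
def StableAmong {V : Type*} (pref : V → V → V → Prop) (M : V → V) (S : Set V) : Prop :=
  ¬ ∃ x ∈ S, ∃ y ∈ S, x ≠ y ∧ pref x (M y) (M x) ∧ pref y (M x) (M y)

/-- `D_h[i]`: the sub-hourglass on layers `0, …, i` admits a perfect
exchange-stable matching in which layer `i` is horizontally matched. -/
def Dh {V : Type*} (pref : V → V → V → Prop) (u w : ℕ → V) (i : ℕ) : Prop :=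
  ∃ M : V → V, PerfectUpTo u w M i ∧ StableAmong pref M (LayerSet u w i) ∧
    HorizAt u w M i

/-- `D_c[i]`: the sub-hourglass on layers `0, …, i` admits a perfect
exchange-stable matching in which layers `i - 1` and `i` are cross-matched. -/
def Dc {V : Type*} (pref : V → V → V → Prop) (u w : ℕ → V) (i : ℕ) : Prop :=
  ∃ M : V → V, PerfectUpTo u w M i ∧ StableAmong pref M (LayerSet u w i) ∧
    CrossAt u w M i

/-- The matching that horizontally matches layers `i - 1` and `i`. -/
def horizM {V : Type*} [DecidableEq V] (u w : ℕ → V) (i : ℕ) : V → V := fun v =>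
  if v = u (i - 1) then w (i - 1) else if v = u i then w i
  else if v = w (i - 1) then u (i - 1) else if v = w i then u i else v

/-- The matching that cross-matches layers `i - 1` and `i`. -/
def crossM {V : Type*} [DecidableEq V] (u w : ℕ → V) (i : ℕ) : V → V := fun v =>
  if v = u (i - 1) then w i else if v = u i then w (i - 1)
  else if v = w (i - 1) then u i else if v = w i then u (i - 1) else v

/-- `τ_h^{i-1,i}`: horizontally matching layers `i - 1` and `i` is
exchange-stable restricted to the four agents of those layers. -/
def tauH {V : Type*} [DecidableEq V] (pref : V → V → V → Prop) (u w : ℕ → V) (i : ℕ) : Prop :=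
  StableAmong pref (horizM u w i) {u (i - 1), w (i - 1), u i, w i}

/-- `τ_c^{i-1,i}`: cross-matching layers `i - 1` and `i` is exchange-stable
restricted to the four agents of those layers. -/
def tauC {V : Type*} [DecidableEq V] (pref : V → V → V → Prop) (u w : ℕ → V) (i : ℕ) : Prop :=
  StableAmong pref (crossM u w i) {u (i - 1), w (i - 1), u i, w i}

section Helpers

variable {V : Type*}

private lemma stable_mono {pref : V → V → V → Prop} {M : V → V} {S T : Set V}
    (hST : S ⊆ T) (hst : StableAmong pref M T) : StableAmong pref M S := by
  rintro ⟨x, hx, y, hy, hne, h1, h2⟩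
  exact hst ⟨x, hST hx, y, hST hy, hne, h1, h2⟩

private lemma stable_congr {pref : V → V → V → Prop} {M M' : V → V} {S : Set V}
    (hMM : ∀ v ∈ S, M v = M' v) (hst : StableAmong pref M S) : StableAmong pref M' S := by
  rintro ⟨x, hx, y, hy, hne, h1, h2⟩
  refine hst ⟨x, hx, y, hy, hne, ?_, ?_⟩
  · rwa [hMM y hy, hMM x hx]
  · rwa [hMM y hy, hMM x hx]

private lemma adj_u {h : ℕ} {u w : ℕ → V} (hu : Set.InjOn u (Set.Iio h))
    (huw : ∀ i < h, ∀ j < h, u i ≠ w j) {a : ℕ} (ha : a < h) {p : V}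
    (hp : HGAdj h u w (u a) p) :
    ∃ b < h, p = w b ∧ (a = b ∨ a + 1 = b ∨ b + 1 = a) := by
  obtain ⟨i', hi', j', hj', hc, hadj⟩ := hp
  rcases hc with ⟨h1, h2⟩ | ⟨h1, h2⟩
  · have hai : a = i' := hu (Set.mem_Iio.mpr ha) (Set.mem_Iio.mpr hi') h1
    exact ⟨j', hj', h2, by omega⟩
  · exact absurd h1 (huw a ha i' hi')

private lemma adj_w {h : ℕ} {u w : ℕ → V} (hw : Set.InjOn w (Set.Iio h))
    (huw : ∀ i < h, ∀ j < h, u i ≠ w j) {a : ℕ} (ha : a < h) {p : V}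
    (hp : HGAdj h u w (w a) p) :
    ∃ b < h, p = u b ∧ (a = b ∨ a + 1 = b ∨ b + 1 = a) := by
  obtain ⟨i', hi', j', hj', hc, hadj⟩ := hp
  rcases hc with ⟨h1, h2⟩ | ⟨h1, h2⟩
  · exact absurd h1.symm (huw i' hi' a ha)
  · have hai : a = i' := hw (Set.mem_Iio.mpr ha) (Set.mem_Iio.mpr hi') h1
    exact ⟨j', hj', h2, by omega⟩

private lemma adj_to_w {h : ℕ} {u w : ℕ → V} (hw : Set.InjOn w (Set.Iio h))
    (huw : ∀ i < h, ∀ j < h, u i ≠ w j) {j : ℕ} (hj : j < h) {y : V}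
    (hy : HGAdj h u w y (w j)) :
    ∃ a < h, y = u a ∧ (a = j ∨ a + 1 = j ∨ j + 1 = a) := by
  obtain ⟨i', hi', j', hj', hc, hadj⟩ := hy
  rcases hc with ⟨h1, h2⟩ | ⟨h1, h2⟩
  · have hjj : j = j' := hw (Set.mem_Iio.mpr hj) (Set.mem_Iio.mpr hj') h2
    exact ⟨i', hi', h1, by omega⟩
  · exact absurd h2.symm (huw j' hj' j hj)

private lemma adj_to_u {h : ℕ} {u w : ℕ → V} (hu : Set.InjOn u (Set.Iio h))
    (huw : ∀ i < h, ∀ j < h, u i ≠ w j) {j : ℕ} (hj : j < h) {y : V}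
    (hy : HGAdj h u w y (u j)) :
    ∃ a < h, y = w a ∧ (a = j ∨ a + 1 = j ∨ j + 1 = a) := by
  obtain ⟨i', hi', j', hj', hc, hadj⟩ := hy
  rcases hc with ⟨h1, h2⟩ | ⟨h1, h2⟩
  · exact absurd h2 (huw j hj j' hj')
  · have hjj : j = j' := hu (Set.mem_Iio.mpr hj) (Set.mem_Iio.mpr hj') h2
    exact ⟨i', hi', h1, by omega⟩

private lemma mem_layer_u {u w : ℕ → V} {z k : ℕ} (hz : z ≤ k) : u z ∈ LayerSet u w k :=
  ⟨z, hz, Or.inl rfl⟩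

private lemma mem_layer_w {u w : ℕ → V} {z k : ℕ} (hz : z ≤ k) : w z ∈ LayerSet u w k :=
  ⟨z, hz, Or.inr rfl⟩

private lemma layer_mono {u w : ℕ → V} {a b : ℕ} (hab : a ≤ b) :
    LayerSet u w a ⊆ LayerSet u w b := by
  rintro v ⟨z, hz, hv⟩
  exact ⟨z, hz.trans hab, hv⟩

private lemma layer_le_u {h : ℕ} {u w : ℕ → V} (hu : Set.InjOn u (Set.Iio h))
    (huw : ∀ i < h, ∀ j < h, u i ≠ w j) {a k : ℕ} (ha : a < h) (hk : k < h)
    (hmem : u a ∈ LayerSet u w k) : a ≤ k := by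
  obtain ⟨z, hz, hv⟩ := hmem
  rcases hv with hv | hv
  · have : a = z := hu (Set.mem_Iio.mpr ha) (Set.mem_Iio.mpr (hz.trans_lt hk)) hv
    omega
  · exact absurd hv (huw a ha z (hz.trans_lt hk))

private lemma layer_le_w {h : ℕ} {u w : ℕ → V} (hw : Set.InjOn w (Set.Iio h))
    (huw : ∀ i < h, ∀ j < h, u i ≠ w j) {a k : ℕ} (ha : a < h) (hk : k < h)
    (hmem : w a ∈ LayerSet u w k) : a ≤ k := by
  obtain ⟨z, hz, hv⟩ := hmem
  rcases hv with hv | hv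
  · exact absurd hv.symm (huw z (hz.trans_lt hk) a ha)
  · have : a = z := hw (Set.mem_Iio.mpr ha) (Set.mem_Iio.mpr (hz.trans_lt hk)) hv
    omega

private lemma perfect_restrict {u w : ℕ → V} {M : V → V} {i k : ℕ} (hk : k ≤ i)
    (hperf : PerfectUpTo u w M i) (hno : ¬ CrossAt u w M (k + 1)) :
    PerfectUpTo u w M k := by
  intro z hz
  rcases hperf z (hz.trans hk) with hh | hh | ⟨h1, h2⟩
  · exact Or.inl hh
  · exact Or.inr (Or.inl hh)
  · rcases Nat.lt_or_ge z k with hzk | hzk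
    · exact Or.inr (Or.inr ⟨by omega, h2⟩)
    · have hzek : z = k := le_antisymm hz hzk
      exact absurd (hzek ▸ h2) hno

private lemma perfect_top {u w : ℕ → V} {M : V → V} {i : ℕ}
    (hperf : PerfectUpTo u w M i) :
    HorizAt u w M i ∨ CrossAt u w M i := by
  rcases hperf i le_rfl with hh | hh | ⟨h1, h2⟩
  · exact Or.inl hh
  · exact Or.inr hh
  · omega

section Main

variable {V : Type*} [DecidableEq V] {h : ℕ} {u w : ℕ → V} {pref : V → V → V → Prop}

private lemma A_bwd1 (hu : Set.InjOn u (Set.Iio h)) (hw : Set.InjOn w (Set.Iio h))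
    (huw : ∀ i < h, ∀ j < h, u i ≠ w j)
    (hacc : ∀ x p q, pref x p q → HGAdj h u w x p ∧ HGAdj h u w x q)
    {i : ℕ} (hi2 : 2 ≤ i) (hih : i + 1 ≤ h)
    (hDc : Dc pref u w (i - 1)) : Dh pref u w i := by
  obtain ⟨M, hperf, hstab, hcr⟩ := hDc
  have hih1 : i < h := by omega
  have h1h : i - 1 < h := by omega
  have h2h : i - 2 < h := by omega
  have huu : ∀ a b : ℕ, a < h → b < h → a ≠ b → u a ≠ u b := fun a b ha hb hab e =>
    hab (hu (Set.mem_Iio.mpr ha) (Set.mem_Iio.mpr hb) e)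
  have hww : ∀ a b : ℕ, a < h → b < h → a ≠ b → w a ≠ w b := fun a b ha hb hab e =>
    hab (hw (Set.mem_Iio.mpr ha) (Set.mem_Iio.mpr hb) e)
  have e12 : i - 1 - 1 = i - 2 := by omega
  set M' : V → V := fun v => if v = u i then w i else if v = w i then u i else M v with hM'
  have eM : ∀ v, v ≠ u i → v ≠ w i → M' v = M v := by
    intro v h1 h2
    simp only [hM', if_neg h1, if_neg h2]
  have eu : M' (u i) = w i := by simp [hM']
  have ew : M' (w i) = u i := by
    simp [hM', Ne.symm (huw i hih1 i hih1)]
  have eLow : ∀ y : V, (∃ z ≤ i - 1, y = u z ∨ y = w z) → M' y = M y := by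
    rintro y ⟨z, hz, rfl | rfl⟩
    · exact eM _ (huu z i (by omega) hih1 (by omega)) (huw z (by omega) i hih1)
    · exact eM _ (Ne.symm (huw i hih1 z (by omega))) (hww z i (by omega) hih1 (by omega))
  have horizT : ∀ z ≤ i - 1, HorizAt u w M z → HorizAt u w M' z := by
    intro z hz hc
    exact ⟨by rw [eLow _ ⟨z, hz, Or.inl rfl⟩]; exact hc.1,
      by rw [eLow _ ⟨z, hz, Or.inr rfl⟩]; exact hc.2⟩
  have crossT : ∀ z ≤ i - 1, CrossAt u w M z → CrossAt u w M' z := by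
    intro z hz hc
    refine ⟨hc.1, ?_, ?_, ?_, ?_⟩
    · rw [eLow _ ⟨z, hz, Or.inl rfl⟩]; exact hc.2.1
    · rw [eLow _ ⟨z - 1, by omega, Or.inl rfl⟩]; exact hc.2.2.1
    · rw [eLow _ ⟨z, hz, Or.inr rfl⟩]; exact hc.2.2.2.1
    · rw [eLow _ ⟨z - 1, by omega, Or.inr rfl⟩]; exact hc.2.2.2.2
  have hperf' : PerfectUpTo u w M' i := by
    intro z hz
    rcases Nat.lt_or_ge z i with hzi | hzi
    · have hz1 : z ≤ i - 1 := by omega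
      rcases hperf z hz1 with hh | hh | ⟨hh1, hh2⟩
      · exact Or.inl (horizT z hz1 hh)
      · exact Or.inr (Or.inl (crossT z hz1 hh))
      · exact Or.inr (Or.inr ⟨by omega, crossT (z + 1) (by omega) hh2⟩)
    · have hzi' : z = i := by omega
      subst hzi'
      exact Or.inl ⟨eu, ew⟩
  have key : ∀ x y : V, (x = u i ∨ x = w i) → y ∈ LayerSet u w i → y ≠ x →
      pref x (M' y) (M' x) → pref y (M' x) (M' y) → False := by
    intro x y hx hy hyx hpx hpy
    rcases hx with rfl | rfl
    · rw [eu] at hpy hpx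
      obtain ⟨a, hah, rfl, hadj⟩ := adj_to_w hw huw hih1 (hacc _ _ _ hpy).1
      have hai : a ≤ i := layer_le_u hu huw hah hih1 hy
      have hane : a ≠ i := fun e => hyx (by rw [e])
      have ha1 : a = i - 1 := by omega
      subst ha1
      rw [eLow _ ⟨i - 1, le_rfl, Or.inl rfl⟩, hcr.2.1, e12] at hpx
      obtain ⟨b, hbh, hb, hadj2⟩ := adj_u hu huw hih1 (hacc _ _ _ hpx).1
      have : i - 2 = b := hw (Set.mem_Iio.mpr h2h) (Set.mem_Iio.mpr hbh) hb
      omega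
    · rw [ew] at hpy hpx
      obtain ⟨a, hah, rfl, hadj⟩ := adj_to_u hu huw hih1 (hacc _ _ _ hpy).1
      have hai : a ≤ i := layer_le_w hw huw hah hih1 hy
      have hane : a ≠ i := fun e => hyx (by rw [e])
      have ha1 : a = i - 1 := by omega
      subst ha1
      rw [eLow _ ⟨i - 1, le_rfl, Or.inr rfl⟩, hcr.2.2.2.1, e12] at hpx
      obtain ⟨b, hbh, hb, hadj2⟩ := adj_w hw huw hih1 (hacc _ _ _ hpx).1
      have : i - 2 = b := hu (Set.mem_Iio.mpr h2h) (Set.mem_Iio.mpr hbh) hb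
      omega
  have hS : StableAmong pref M' (LayerSet u w i) := by
    rintro ⟨x, hx, y, hy, hxy, hpx, hpy⟩
    by_cases hxt : x = u i ∨ x = w i
    · exact key x y hxt hy (Ne.symm hxy) hpx hpy
    · by_cases hyt : y = u i ∨ y = w i
      · exact key y x hyt hx hxy hpy hpx
      · push_neg at hxt hyt
        have hx' : ∃ z ≤ i - 1, x = u z ∨ x = w z := by
          obtain ⟨z, hz, hv⟩ := hx
          refine ⟨z, ?_, hv⟩
          by_contra hcon
          have : z = i := by omega
          subst this
          rcases hv with rfl | rfl
          · exact hxt.1 rfl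
          · exact hxt.2 rfl
        have hy' : ∃ z ≤ i - 1, y = u z ∨ y = w z := by
          obtain ⟨z, hz, hv⟩ := hy
          refine ⟨z, ?_, hv⟩
          by_contra hcon
          have : z = i := by omega
          subst this
          rcases hv with rfl | rfl
          · exact hyt.1 rfl
          · exact hyt.2 rfl
        refine hstab ⟨x, hx', y, hy', hxy, ?_, ?_⟩
        · rwa [eLow x hx', eLow y hy'] at hpx
        · rwa [eLow x hx', eLow y hy'] at hpy
  exact ⟨M', hperf', hS, eu, ew⟩

private lemma A_bwd2 (hu : Set.InjOn u (Set.Iio h)) (hw : Set.InjOn w (Set.Iio h))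
    (huw : ∀ i < h, ∀ j < h, u i ≠ w j)
    (hacc : ∀ x p q, pref x p q → HGAdj h u w x p ∧ HGAdj h u w x q)
    {i : ℕ} (hi2 : 2 ≤ i) (hih : i + 1 ≤ h)
    (hDh : Dh pref u w (i - 1)) (htau : tauH pref u w i) : Dh pref u w i := by
  obtain ⟨M, hperf, hstab, hhor⟩ := hDh
  have hih1 : i < h := by omega
  have h1h : i - 1 < h := by omega
  have huu : ∀ a b : ℕ, a < h → b < h → a ≠ b → u a ≠ u b := fun a b ha hb hab e =>
    hab (hu (Set.mem_Iio.mpr ha) (Set.mem_Iio.mpr hb) e)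
  have hww : ∀ a b : ℕ, a < h → b < h → a ≠ b → w a ≠ w b := fun a b ha hb hab e =>
    hab (hw (Set.mem_Iio.mpr ha) (Set.mem_Iio.mpr hb) e)
  set M' : V → V := fun v => if v = u i then w i else if v = w i then u i else M v with hM'
  have eM : ∀ v, v ≠ u i → v ≠ w i → M' v = M v := by
    intro v h1 h2
    simp only [hM', if_neg h1, if_neg h2]
  have eu : M' (u i) = w i := by simp [hM']
  have ew : M' (w i) = u i := by
    simp [hM', Ne.symm (huw i hih1 i hih1)]
  have eLow : ∀ y : V, (∃ z ≤ i - 1, y = u z ∨ y = w z) → M' y = M y := by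
    rintro y ⟨z, hz, rfl | rfl⟩
    · exact eM _ (huu z i (by omega) hih1 (by omega)) (huw z (by omega) i hih1)
    · exact eM _ (Ne.symm (huw i hih1 z (by omega))) (hww z i (by omega) hih1 (by omega))
  have horizT : ∀ z ≤ i - 1, HorizAt u w M z → HorizAt u w M' z := by
    intro z hz hc
    exact ⟨by rw [eLow _ ⟨z, hz, Or.inl rfl⟩]; exact hc.1,
      by rw [eLow _ ⟨z, hz, Or.inr rfl⟩]; exact hc.2⟩
  have crossT : ∀ z ≤ i - 1, CrossAt u w M z → CrossAt u w M' z := by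
    intro z hz hc
    refine ⟨hc.1, ?_, ?_, ?_, ?_⟩
    · rw [eLow _ ⟨z, hz, Or.inl rfl⟩]; exact hc.2.1
    · rw [eLow _ ⟨z - 1, by omega, Or.inl rfl⟩]; exact hc.2.2.1
    · rw [eLow _ ⟨z, hz, Or.inr rfl⟩]; exact hc.2.2.2.1
    · rw [eLow _ ⟨z - 1, by omega, Or.inr rfl⟩]; exact hc.2.2.2.2
  have hperf' : PerfectUpTo u w M' i := by
    intro z hz
    rcases Nat.lt_or_ge z i with hzi | hzi
    · have hz1 : z ≤ i - 1 := by omega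
      rcases hperf z hz1 with hh | hh | ⟨hh1, hh2⟩
      · exact Or.inl (horizT z hz1 hh)
      · exact Or.inr (Or.inl (crossT z hz1 hh))
      · exact Or.inr (Or.inr ⟨by omega, crossT (z + 1) (by omega) hh2⟩)
    · have hzi' : z = i := by omega
      subst hzi'
      exact Or.inl ⟨eu, ew⟩
  have ehu1 : horizM u w i (u (i - 1)) = w (i - 1) := by simp [horizM]
  have ehui : horizM u w i (u i) = w i := by
    simp [horizM, huu i (i - 1) hih1 h1h (by omega)]
  have ehw1 : horizM u w i (w (i - 1)) = u (i - 1) := by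
    simp [horizM, Ne.symm (huw (i - 1) h1h (i - 1) h1h), Ne.symm (huw i hih1 (i - 1) h1h)]
  have ehwi : horizM u w i (w i) = u i := by
    simp [horizM, Ne.symm (huw (i - 1) h1h i hih1), Ne.symm (huw i hih1 i hih1),
      hww i (i - 1) hih1 h1h (by omega)]
  have key : ∀ x y : V, (x = u i ∨ x = w i) → y ∈ LayerSet u w i → y ≠ x →
      pref x (M' y) (M' x) → pref y (M' x) (M' y) → False := by
    intro x y hx hy hyx hpx hpy
    rcases hx with rfl | rfl
    · rw [eu] at hpy hpx
      obtain ⟨a, hah, rfl, hadj⟩ := adj_to_w hw huw hih1 (hacc _ _ _ hpy).1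
      have hai : a ≤ i := layer_le_u hu huw hah hih1 hy
      have hane : a ≠ i := fun e => hyx (by rw [e])
      have ha1 : a = i - 1 := by omega
      subst ha1
      rw [eLow _ ⟨i - 1, le_rfl, Or.inl rfl⟩, hhor.1] at hpx hpy
      refine htau ⟨u i, ?_, u (i - 1), ?_, huu i (i - 1) hih1 h1h (by omega), ?_, ?_⟩
      · simp
      · simp
      · rw [ehu1, ehui]; exact hpx
      · rw [ehu1, ehui]; exact hpy
    · rw [ew] at hpy hpx
      obtain ⟨a, hah, rfl, hadj⟩ := adj_to_u hu huw hih1 (hacc _ _ _ hpy).1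
      have hai : a ≤ i := layer_le_w hw huw hah hih1 hy
      have hane : a ≠ i := fun e => hyx (by rw [e])
      have ha1 : a = i - 1 := by omega
      subst ha1
      rw [eLow _ ⟨i - 1, le_rfl, Or.inr rfl⟩, hhor.2] at hpx hpy
      refine htau ⟨w i, ?_, w (i - 1), ?_, hww i (i - 1) hih1 h1h (by omega), ?_, ?_⟩
      · simp
      · simp
      · rw [ehw1, ehwi]; exact hpx
      · rw [ehw1, ehwi]; exact hpy
  have hS : StableAmong pref M' (LayerSet u w i) := by
    rintro ⟨x, hx, y, hy, hxy, hpx, hpy⟩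
    by_cases hxt : x = u i ∨ x = w i
    · exact key x y hxt hy (Ne.symm hxy) hpx hpy
    · by_cases hyt : y = u i ∨ y = w i
      · exact key y x hyt hx hxy hpy hpx
      · push_neg at hxt hyt
        have hx' : ∃ z ≤ i - 1, x = u z ∨ x = w z := by
          obtain ⟨z, hz, hv⟩ := hx
          refine ⟨z, ?_, hv⟩
          by_contra hcon
          have : z = i := by omega
          subst this
          rcases hv with rfl | rfl
          · exact hxt.1 rfl
          · exact hxt.2 rfl
        have hy' : ∃ z ≤ i - 1, y = u z ∨ y = w z := by
          obtain ⟨z, hz, hv⟩ := hy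
          refine ⟨z, ?_, hv⟩
          by_contra hcon
          have : z = i := by omega
          subst this
          rcases hv with rfl | rfl
          · exact hyt.1 rfl
          · exact hyt.2 rfl
        refine hstab ⟨x, hx', y, hy', hxy, ?_, ?_⟩
        · rwa [eLow x hx', eLow y hy'] at hpx
        · rwa [eLow x hx', eLow y hy'] at hpy
  exact ⟨M', hperf', hS, eu, ew⟩

private lemma A_fwd (hu : Set.InjOn u (Set.Iio h)) (hw : Set.InjOn w (Set.Iio h))
    (huw : ∀ i < h, ∀ j < h, u i ≠ w j)
    {i : ℕ} (hi2 : 2 ≤ i) (hih : i + 1 ≤ h)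
    (hDh : Dh pref u w i) :
    Dc pref u w (i - 1) ∨ (Dh pref u w (i - 1) ∧ tauH pref u w i) := by
  obtain ⟨M, hperf, hstab, hhor⟩ := hDh
  have hih1 : i < h := by omega
  have h1h : i - 1 < h := by omega
  have huu : ∀ a b : ℕ, a < h → b < h → a ≠ b → u a ≠ u b := fun a b ha hb hab e =>
    hab (hu (Set.mem_Iio.mpr ha) (Set.mem_Iio.mpr hb) e)
  have hww : ∀ a b : ℕ, a < h → b < h → a ≠ b → w a ≠ w b := fun a b ha hb hab e =>
    hab (hw (Set.mem_Iio.mpr ha) (Set.mem_Iio.mpr hb) e)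
  have hnc : ¬ CrossAt u w M (i - 1 + 1) := by
    have e : i - 1 + 1 = i := by omega
    rw [e]
    rintro ⟨-, e1, -, -, -⟩
    rw [hhor.1] at e1
    exact hww i (i - 1) hih1 h1h (by omega) e1
  have hperf1 : PerfectUpTo u w M (i - 1) := perfect_restrict (by omega) hperf hnc
  have hstab1 : StableAmong pref M (LayerSet u w (i - 1)) :=
    stable_mono (layer_mono (by omega)) hstab
  rcases perfect_top hperf1 with hh | hc
  · right
    refine ⟨⟨M, hperf1, hstab1, hh⟩, ?_⟩
    have hsub : ({u (i - 1), w (i - 1), u i, w i} : Set V) ⊆ LayerSet u w i := by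
      intro v hv
      simp only [Set.mem_insert_iff, Set.mem_singleton_iff] at hv
      rcases hv with rfl | rfl | rfl | rfl
      · exact mem_layer_u (by omega)
      · exact mem_layer_w (by omega)
      · exact mem_layer_u le_rfl
      · exact mem_layer_w le_rfl
    refine stable_congr ?_ (stable_mono hsub hstab)
    intro v hv
    simp only [Set.mem_insert_iff, Set.mem_singleton_iff] at hv
    rcases hv with rfl | rfl | rfl | rfl
    · rw [hh.1]; simp [horizM]
    · rw [hh.2]
      simp [horizM, Ne.symm (huw (i - 1) h1h (i - 1) h1h), Ne.symm (huw i hih1 (i - 1) h1h)]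
    · rw [hhor.1]
      simp [horizM, huu i (i - 1) hih1 h1h (by omega)]
    · rw [hhor.2]
      simp [horizM, Ne.symm (huw (i - 1) h1h i hih1), Ne.symm (huw i hih1 i hih1),
        hww i (i - 1) hih1 h1h (by omega)]
  · exact Or.inl ⟨M, hperf1, hstab1, hc⟩

private lemma B_fwd (hu : Set.InjOn u (Set.Iio h)) (hw : Set.InjOn w (Set.Iio h))
    (huw : ∀ i < h, ∀ j < h, u i ≠ w j)
    {i : ℕ} (hi2 : 2 ≤ i) (hih : i + 1 ≤ h)
    (hDc : Dc pref u w i) :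
    (Dc pref u w (i - 2) ∨ Dh pref u w (i - 2)) ∧ tauC pref u w i := by
  obtain ⟨M, hperf, hstab, hcr⟩ := hDc
  have hih1 : i < h := by omega
  have h1h : i - 1 < h := by omega
  have h2h : i - 2 < h := by omega
  have huu : ∀ a b : ℕ, a < h → b < h → a ≠ b → u a ≠ u b := fun a b ha hb hab e =>
    hab (hu (Set.mem_Iio.mpr ha) (Set.mem_Iio.mpr hb) e)
  have hww : ∀ a b : ℕ, a < h → b < h → a ≠ b → w a ≠ w b := fun a b ha hb hab e =>
    hab (hw (Set.mem_Iio.mpr ha) (Set.mem_Iio.mpr hb) e)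
  have ei1 : i - 1 + 1 = i := by omega
  have hcr2 : M (u (i - 1)) = w i := by
    have := hcr.2.2.1
    rwa [show i - 1 = i - 1 from rfl] at this
  have hnc : ¬ CrossAt u w M (i - 2 + 1) := by
    have e : i - 2 + 1 = i - 1 := by omega
    rw [e]
    rintro ⟨-, e1, -, -, -⟩
    rw [hcr2] at e1
    exact hww i (i - 1 - 1) hih1 (by omega) (by omega) e1
  have hperf2 : PerfectUpTo u w M (i - 2) := perfect_restrict (by omega) hperf hnc
  have hstab2 : StableAmong pref M (LayerSet u w (i - 2)) :=
    stable_mono (layer_mono (by omega)) hstab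
  constructor
  · rcases perfect_top hperf2 with hh | hc
    · exact Or.inr ⟨M, hperf2, hstab2, hh⟩
    · exact Or.inl ⟨M, hperf2, hstab2, hc⟩
  · have hsub : ({u (i - 1), w (i - 1), u i, w i} : Set V) ⊆ LayerSet u w i := by
      intro v hv
      simp only [Set.mem_insert_iff, Set.mem_singleton_iff] at hv
      rcases hv with rfl | rfl | rfl | rfl
      · exact mem_layer_u (by omega)
      · exact mem_layer_w (by omega)
      · exact mem_layer_u le_rfl
      · exact mem_layer_w le_rfl
    refine stable_congr ?_ (stable_mono hsub hstab)
    intro v hv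
    simp only [Set.mem_insert_iff, Set.mem_singleton_iff] at hv
    rcases hv with rfl | rfl | rfl | rfl
    · rw [hcr2]; simp [crossM]
    · rw [hcr.2.2.2.2]
      simp [crossM, Ne.symm (huw (i - 1) h1h (i - 1) h1h), Ne.symm (huw i hih1 (i - 1) h1h)]
    · rw [hcr.2.1]
      simp [crossM, huu i (i - 1) hih1 h1h (by omega)]
    · rw [hcr.2.2.2.1]
      simp [crossM, Ne.symm (huw (i - 1) h1h i hih1), Ne.symm (huw i hih1 i hih1),
        hww i (i - 1) hih1 h1h (by omega)]

private lemma B_bwd (hu : Set.InjOn u (Set.Iio h)) (hw : Set.InjOn w (Set.Iio h))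
    (huw : ∀ i < h, ∀ j < h, u i ≠ w j)
    (hacc : ∀ x p q, pref x p q → HGAdj h u w x p ∧ HGAdj h u w x q)
    {i : ℕ} (hi2 : 2 ≤ i) (hih : i + 1 ≤ h)
    (hD : Dc pref u w (i - 2) ∨ Dh pref u w (i - 2)) (htau : tauC pref u w i) :
    Dc pref u w i := by
  obtain ⟨M, hperf, hstab⟩ :
      ∃ M : V → V, PerfectUpTo u w M (i - 2) ∧ StableAmong pref M (LayerSet u w (i - 2)) := by
    rcases hD with ⟨M, a, b, -⟩ | ⟨M, a, b, -⟩ <;> exact ⟨M, a, b⟩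
  have hih1 : i < h := by omega
  have h1h : i - 1 < h := by omega
  have h2h : i - 2 < h := by omega
  have h3h : i - 3 < h := by omega
  have huu : ∀ a b : ℕ, a < h → b < h → a ≠ b → u a ≠ u b := fun a b ha hb hab e =>
    hab (hu (Set.mem_Iio.mpr ha) (Set.mem_Iio.mpr hb) e)
  have hww : ∀ a b : ℕ, a < h → b < h → a ≠ b → w a ≠ w b := fun a b ha hb hab e =>
    hab (hw (Set.mem_Iio.mpr ha) (Set.mem_Iio.mpr hb) e)
  set M' : V → V := fun v => if v = u (i - 1) then w i else if v = u i then w (i - 1)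
    else if v = w (i - 1) then u i else if v = w i then u (i - 1) else M v with hM'
  have eM : ∀ v, v ≠ u (i - 1) → v ≠ u i → v ≠ w (i - 1) → v ≠ w i → M' v = M v := by
    intro v h1 h2 h3 h4
    simp only [hM', if_neg h1, if_neg h2, if_neg h3, if_neg h4]
  have e1 : M' (u (i - 1)) = w i := by simp [hM']
  have e2 : M' (u i) = w (i - 1) := by
    simp [hM', huu i (i - 1) hih1 h1h (by omega)]
  have e3 : M' (w (i - 1)) = u i := by
    simp [hM', Ne.symm (huw (i - 1) h1h (i - 1) h1h), Ne.symm (huw i hih1 (i - 1) h1h)]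
  have e4 : M' (w i) = u (i - 1) := by
    simp [hM', Ne.symm (huw (i - 1) h1h i hih1), Ne.symm (huw i hih1 i hih1),
      hww i (i - 1) hih1 h1h (by omega)]
  have hC : CrossAt u w M' i := ⟨by omega, e2, e1, e4, e3⟩
  have eLow : ∀ y : V, (∃ z ≤ i - 2, y = u z ∨ y = w z) → M' y = M y := by
    rintro y ⟨z, hz, rfl | rfl⟩
    · exact eM _ (huu z (i - 1) (by omega) h1h (by omega))
        (huu z i (by omega) hih1 (by omega)) (huw z (by omega) (i - 1) h1h)
        (huw z (by omega) i hih1)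
    · exact eM _ (Ne.symm (huw (i - 1) h1h z (by omega))) (Ne.symm (huw i hih1 z (by omega)))
        (hww z (i - 1) (by omega) h1h (by omega)) (hww z i (by omega) hih1 (by omega))
  have horizT : ∀ z ≤ i - 2, HorizAt u w M z → HorizAt u w M' z := by
    intro z hz hc
    exact ⟨by rw [eLow _ ⟨z, hz, Or.inl rfl⟩]; exact hc.1,
      by rw [eLow _ ⟨z, hz, Or.inr rfl⟩]; exact hc.2⟩
  have crossT : ∀ z ≤ i - 2, CrossAt u w M z → CrossAt u w M' z := by
    intro z hz hc
    refine ⟨hc.1, ?_, ?_, ?_, ?_⟩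
    · rw [eLow _ ⟨z, hz, Or.inl rfl⟩]; exact hc.2.1
    · rw [eLow _ ⟨z - 1, by omega, Or.inl rfl⟩]; exact hc.2.2.1
    · rw [eLow _ ⟨z, hz, Or.inr rfl⟩]; exact hc.2.2.2.1
    · rw [eLow _ ⟨z - 1, by omega, Or.inr rfl⟩]; exact hc.2.2.2.2
  have hperf' : PerfectUpTo u w M' i := by
    intro z hz
    rcases Nat.lt_or_ge z (i - 1) with hzi | hzi
    · have hz2 : z ≤ i - 2 := by omega
      rcases hperf z hz2 with hh | hh | ⟨hh1, hh2⟩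
      · exact Or.inl (horizT z hz2 hh)
      · exact Or.inr (Or.inl (crossT z hz2 hh))
      · exact Or.inr (Or.inr ⟨by omega, crossT (z + 1) (by omega) hh2⟩)
    · rcases Nat.lt_or_ge z i with hzi2 | hzi2
      · have hz1 : z = i - 1 := by omega
        subst hz1
        refine Or.inr (Or.inr ⟨by omega, ?_⟩)
        rw [show i - 1 + 1 = i by omega]
        exact hC
      · have hz1 : z = i := by omega
        subst hz1
        exact Or.inr (Or.inl hC)
  have low : ∀ y : V, y ∈ LayerSet u w i →
      ¬(y = u (i - 1) ∨ y = w (i - 1) ∨ y = u i ∨ y = w i) →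
      (∃ z ≤ i - 2, y = u z ∨ y = w z) := by
    rintro y ⟨z, hz, hv⟩ hQ
    refine ⟨z, ?_, hv⟩
    by_contra hcon
    have hz1 : z = i - 1 ∨ z = i := by omega
    rcases hz1 with rfl | rfl
    · rcases hv with rfl | rfl
      · exact hQ (Or.inl rfl)
      · exact hQ (Or.inr (Or.inl rfl))
    · rcases hv with rfl | rfl
      · exact hQ (Or.inr (Or.inr (Or.inl rfl)))
      · exact hQ (Or.inr (Or.inr (Or.inr rfl)))
  have hMu2 : M (u (i - 2)) = w (i - 2) ∨ M (u (i - 2)) = w (i - 3) := by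
    rcases perfect_top hperf with hh | hc
    · exact Or.inl hh.1
    · refine Or.inr ?_
      have := hc.2.1
      rwa [show i - 2 - 1 = i - 3 by omega] at this
  have hMw2 : M (w (i - 2)) = u (i - 2) ∨ M (w (i - 2)) = u (i - 3) := by
    rcases perfect_top hperf with hh | hc
    · exact Or.inl hh.2
    · refine Or.inr ?_
      have := hc.2.2.2.1
      rwa [show i - 2 - 1 = i - 3 by omega] at this
  have key : ∀ x y : V, (x = u (i - 1) ∨ x = w (i - 1) ∨ x = u i ∨ x = w i) →
      (∃ z ≤ i - 2, y = u z ∨ y = w z) →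
      pref x (M' y) (M' x) → pref y (M' x) (M' y) → False := by
    intro x y hxQ hyL hpx hpy
    obtain ⟨z, hz, hv⟩ := hyL
    rcases hxQ with rfl | rfl | rfl | rfl
    · rw [e1] at hpy
      obtain ⟨a, hah, ha, hadj⟩ := adj_to_w hw huw hih1 (hacc _ _ _ hpy).1
      rcases hv with rfl | rfl
      · have : z = a := hu (Set.mem_Iio.mpr (by omega)) (Set.mem_Iio.mpr hah) ha
        omega
      · exact absurd ha.symm (huw a hah z (by omega))
    · rw [e3] at hpy
      obtain ⟨a, hah, ha, hadj⟩ := adj_to_u hu huw hih1 (hacc _ _ _ hpy).1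
      rcases hv with rfl | rfl
      · exact absurd ha (huw z (by omega) a hah)
      · have : z = a := hw (Set.mem_Iio.mpr (by omega)) (Set.mem_Iio.mpr hah) ha
        omega
    · rw [e2] at hpy hpx
      obtain ⟨a, hah, ha, hadj⟩ := adj_to_w hw huw h1h (hacc _ _ _ hpy).1
      rcases hv with rfl | rfl
      · have hza : z = a := hu (Set.mem_Iio.mpr (by omega)) (Set.mem_Iio.mpr hah) ha
        have hz2 : z = i - 2 := by omega
        subst hz2
        rw [eLow _ ⟨i - 2, le_rfl, Or.inl rfl⟩] at hpx
        rcases hMu2 with hm | hm <;> rw [hm] at hpx <;>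
          obtain ⟨b, hbh, hb, hadj2⟩ := adj_u hu huw hih1 (hacc _ _ _ hpx).1
        · have : i - 2 = b := hw (Set.mem_Iio.mpr h2h) (Set.mem_Iio.mpr hbh) hb
          omega
        · have : i - 3 = b := hw (Set.mem_Iio.mpr h3h) (Set.mem_Iio.mpr hbh) hb
          omega
      · exact absurd ha.symm (huw a hah z (by omega))
    · rw [e4] at hpy hpx
      obtain ⟨a, hah, ha, hadj⟩ := adj_to_u hu huw h1h (hacc _ _ _ hpy).1
      rcases hv with rfl | rfl
      · exact absurd ha (huw z (by omega) a hah)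
      · have hza : z = a := hw (Set.mem_Iio.mpr (by omega)) (Set.mem_Iio.mpr hah) ha
        have hz2 : z = i - 2 := by omega
        subst hz2
        rw [eLow _ ⟨i - 2, le_rfl, Or.inr rfl⟩] at hpx
        rcases hMw2 with hm | hm <;> rw [hm] at hpx <;>
          obtain ⟨b, hbh, hb, hadj2⟩ := adj_w hw huw hih1 (hacc _ _ _ hpx).1
        · have : i - 2 = b := hu (Set.mem_Iio.mpr h2h) (Set.mem_Iio.mpr hbh) hb
          omega
        · have : i - 3 = b := hu (Set.mem_Iio.mpr h3h) (Set.mem_Iio.mpr hbh) hb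
          omega
  have hMQ : ∀ v : V, (v = u (i - 1) ∨ v = w (i - 1) ∨ v = u i ∨ v = w i) →
      M' v = crossM u w i v := by
    rintro v (rfl | rfl | rfl | rfl)
    · rw [e1]; simp [crossM]
    · rw [e3]
      simp [crossM, Ne.symm (huw (i - 1) h1h (i - 1) h1h), Ne.symm (huw i hih1 (i - 1) h1h)]
    · rw [e2]
      simp [crossM, huu i (i - 1) hih1 h1h (by omega)]
    · rw [e4]
      simp [crossM, Ne.symm (huw (i - 1) h1h i hih1), Ne.symm (huw i hih1 i hih1),
        hww i (i - 1) hih1 h1h (by omega)]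
  have hS : StableAmong pref M' (LayerSet u w i) := by
    rintro ⟨x, hx, y, hy, hxy, hpx, hpy⟩
    by_cases hxQ : x = u (i - 1) ∨ x = w (i - 1) ∨ x = u i ∨ x = w i
    · by_cases hyQ : y = u (i - 1) ∨ y = w (i - 1) ∨ y = u i ∨ y = w i
      · refine htau ⟨x, ?_, y, ?_, hxy, ?_, ?_⟩
        · simp only [Set.mem_insert_iff, Set.mem_singleton_iff]; exact hxQ
        · simp only [Set.mem_insert_iff, Set.mem_singleton_iff]; exact hyQ
        · rw [← hMQ x hxQ, ← hMQ y hyQ]; exact hpx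
        · rw [← hMQ x hxQ, ← hMQ y hyQ]; exact hpy
      · exact key x y hxQ (low y hy hyQ) hpx hpy
    · by_cases hyQ : y = u (i - 1) ∨ y = w (i - 1) ∨ y = u i ∨ y = w i
      · exact key y x hyQ (low x hx hxQ) hpy hpx
      · have hx' := low x hx hxQ
        have hy' := low y hy hyQ
        refine hstab ⟨x, hx', y, hy', hxy, ?_, ?_⟩
        · rwa [eLow x hx', eLow y hy'] at hpx
        · rwa [eLow x hx', eLow y hy'] at hpy
  exact ⟨M', hperf', hS, hC⟩

end Main

end Helpers

/-- the dynamic-programming recurrences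
`D_h[i] = D_c[i-1] ∨ (D_h[i-1] ∧ τ_h^{i-1,i})` and
`D_c[i] = (D_c[i-2] ∨ D_h[i-2]) ∧ τ_c^{i-1,i}` hold for all `2 ≤ i ≤ h - 1`. -/
theorem stmt_18 {V : Type*} [DecidableEq V]
    (h : ℕ) (u w : ℕ → V)
    (hu : Set.InjOn u (Set.Iio h)) (hw : Set.InjOn w (Set.Iio h))
    (huw : ∀ i < h, ∀ j < h, u i ≠ w j)
    (pref : V → V → V → Prop)
    (hacc : ∀ x p q, pref x p q → HGAdj h u w x p ∧ HGAdj h u w x q)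
    (hirr : ∀ x p, ¬ pref x p p)
    (i : ℕ) (hi2 : 2 ≤ i) (hih : i ≤ h - 1) :
    (Dh pref u w i ↔ Dc pref u w (i - 1) ∨ (Dh pref u w (i - 1) ∧ tauH pref u w i)) ∧
    (Dc pref u w i ↔ (Dc pref u w (i - 2) ∨ Dh pref u w (i - 2)) ∧ tauC pref u w i) := by
  have hih' : i + 1 ≤ h := by omega
  constructor
  · constructor
    · exact fun hd => A_fwd hu hw huw hi2 hih' hd
    · rintro (hdc | ⟨hdh, ht⟩)
      · exact A_bwd1 hu hw huw hacc hi2 hih' hdc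
      · exact A_bwd2 hu hw huw hacc hi2 hih' hdh ht
  · constructor
    · exact fun hd => B_fwd hu hw huw hi2 hih' hd
    · rintro ⟨hd, ht⟩
      exact B_bwd hu hw huw hacc hi2 hih' hd ht
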